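/- Let I ⊆ ℚ[X] = ℚ[x₁,…,x_n] be a zero-dimensional radical ideal. Then there exists a non-empty Zariski-open subset U ⊆ ℚ^{n-1} (i.e. the complement of the zero set of some nonzero polynomial in n−1 variables over ℚ) such that for all a = (a₁,…,a_{n-1}) ∈ U, the linear coordinate change φ_a : ℚ[X] → ℚ[X] defined by φ_a(xᵢ) = xᵢ for i = 1,…,n−1 and φ_a(x_n) = x_n + Σ_{i=1}^{n-1} aᵢxᵢ satisfies dim_ℚ(ℚ[X]/φ_a(I)) = dim_ℚ(ℚ[x_n]/(φ_a(I) ∩ ℚ[x_n])). -/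

import Mathlib

open MvPolynomial

noncomputable section
set_option maxHeartbeats 1000000

local notation "Kbar" => AlgebraicClosure ℚ

theorem aux_exists_injective_algHoms (A : Type*) [CommRing A] [Algebra ℚ A]
    [Module.Finite ℚ A] [IsReduced A] :
    ∃ σ : Fin (Module.finrank ℚ A) → (A →ₐ[ℚ] Kbar), Function.Injective σ := by
  haveI : IsArtinianRing A := isArtinian_of_tower ℚ inferInstance
  haveI : Finite {I : Ideal A | I.IsMaximal} := (IsArtinianRing.setOfPred_isMaximal_finite A).to_subtype
  haveI : Fintype {I : Ideal A | I.IsMaximal} := Fintype.ofFinite _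
  letI : ∀ I : {I : Ideal A | I.IsMaximal}, Field (A ⧸ I.1) :=
    fun I => @Ideal.Quotient.field _ _ I.1 I.2
  haveI hfinq : ∀ I : {I : Ideal A | I.IsMaximal}, Module.Finite ℚ (A ⧸ I.1) :=
    fun I => Module.Finite.of_surjective (Ideal.Quotient.mkₐ ℚ I.1).toLinearMap
      Ideal.Quotient.mk_surjective
  let eqv : MaximalSpectrum A ≃ {I : Ideal A | I.IsMaximal} :=
    ⟨fun I => ⟨I.asIdeal, I.isMaximal⟩, fun I => ⟨I.1, I.2⟩, fun _ => rfl, fun _ => rfl⟩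
  let e : A ≃+* (∀ I : {I : Ideal A | I.IsMaximal}, A ⧸ I.1) :=
    (IsArtinianRing.equivPi A).toRingEquiv.trans
      (RingEquiv.piCongrLeft (fun I : {I : Ideal A | I.IsMaximal} => A ⧸ I.1) eqv)
  let eA : A ≃ₐ[ℚ] (∀ I : {I : Ideal A | I.IsMaximal}, A ⧸ I.1) :=
    AlgEquiv.ofRingEquiv (f := e) (fun q => by exact RingHom.map_rat_algebraMap (e : A →+* (∀ I : {I : Ideal A | I.IsMaximal}, A ⧸ I.1)) q)
  have hrank : Module.finrank ℚ A
      = ∑ I : {I : Ideal A | I.IsMaximal}, Module.finrank ℚ (A ⧸ I.1) :=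
    eA.toLinearEquiv.finrank_eq.trans (Module.finrank_pi_fintype ℚ)
  have hcard : Fintype.card (Σ I : {I : Ideal A | I.IsMaximal}, ((A ⧸ I.1) →ₐ[ℚ] Kbar))
      = Module.finrank ℚ A := by
    rw [Fintype.card_sigma, hrank]
    exact Finset.sum_congr rfl fun I _ => AlgHom.card ℚ (A ⧸ I.1) Kbar
  let Φ : (Σ I : {I : Ideal A | I.IsMaximal}, ((A ⧸ I.1) →ₐ[ℚ] Kbar)) → (A →ₐ[ℚ] Kbar) :=
    fun p => p.2.comp (Ideal.Quotient.mkₐ ℚ p.1.1)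
  have hker : ∀ (I : {I : Ideal A | I.IsMaximal}) (f : (A ⧸ I.1) →ₐ[ℚ] Kbar),
      RingHom.ker (Φ ⟨I, f⟩) = I.1 := by
    intro I f
    ext x
    simp only [Φ, RingHom.mem_ker, AlgHom.comp_apply, Ideal.Quotient.mkₐ_eq_mk]
    constructor
    · intro hx
      have : Ideal.Quotient.mk I.1 x = 0 := by
        apply RingHom.injective (f : (A ⧸ I.1) →+* Kbar)
        simpa using hx
      rwa [Ideal.Quotient.eq_zero_iff_mem] at this
    · intro hx
      rw [Ideal.Quotient.eq_zero_iff_mem.mpr hx, map_zero]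
  have hΦ : Function.Injective Φ := by
    rintro ⟨I, f⟩ ⟨J, g⟩ h
    have hIJ : I = J := Subtype.ext (by rw [← hker I f, ← hker J g, h])
    subst hIJ
    have hfg : f = g := by
      apply AlgHom.ext
      intro y
      obtain ⟨x, rfl⟩ := Ideal.Quotient.mk_surjective (I := I.1) y
      exact DFunLike.congr_fun h x
    rw [hfg]
  exact ⟨Φ ∘ (Fintype.equivFinOfCardEq hcard).symm,
    hΦ.comp (Fintype.equivFinOfCardEq hcard).symm.injective⟩

open TensorProduct in
theorem aux_generic_primitive (A : Type) [CommRing A] [Algebra ℚ A]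
    [Module.Finite ℚ A] [IsReduced A] (n : ℕ) (u : Fin n → A) (w : A)
    (hgen : Algebra.adjoin ℚ (Set.range u ∪ {w}) = ⊤) :
    ∃ c : MvPolynomial (Fin n) ℚ, c ≠ 0 ∧
      ∀ a : Fin n → ℚ, eval a c ≠ 0 →
        Algebra.adjoin ℚ {w - ∑ i, a i • u i} = ⊤ := by
  classical
  set d := Module.finrank ℚ A with hd
  let b : Module.Basis (Fin d) ℚ A := Module.finBasis ℚ A
  let R := MvPolynomial (Fin n) ℚ
  let bT : Module.Basis (Fin d) R (R ⊗[ℚ] A) := b.baseChange R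
  let Z : R ⊗[ℚ] A := (1 : R) ⊗ₜ[ℚ] w - ∑ i : Fin n, (X i : R) ⊗ₜ[ℚ] (u i)
  let M : Matrix (Fin d) (Fin d) R := Matrix.of fun j k => bT.repr (Z ^ (j : ℕ)) k
  have key : ∀ (K : Type) [Field K] [Algebra ℚ K] (a : Fin n → K) (t : R ⊗[ℚ] A) (k : Fin d),
      (b.baseChange K).repr (Algebra.TensorProduct.map (aeval a) (AlgHom.id ℚ A) t) k
        = aeval a (bT.repr t k) := by
    intro K _ _ a t k
    induction t using TensorProduct.induction_on with
    | zero =>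
        have h1 : (Algebra.TensorProduct.map (aeval a) (AlgHom.id ℚ A)) (0 : R ⊗[ℚ] A) = 0 :=
          map_zero _
        rw [h1, LinearEquiv.map_zero, LinearEquiv.map_zero]
        simp
    | tmul r x =>
        simp only [Algebra.TensorProduct.map_tmul, AlgHom.coe_id, id_eq,
          Module.Basis.baseChange_repr_tmul, bT]
        rw [Algebra.smul_def, Algebra.smul_def, map_mul, AlgHom.commutes]
    | add s t hs ht => simp [map_add, hs, ht]
  have spec : ∀ (K : Type) [Field K] [Algebra ℚ K] (a : Fin n → K),
      aeval a M.det = (Matrix.of fun (j k : Fin d) => (b.baseChange K).repr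
        ((Algebra.TensorProduct.map (aeval a) (AlgHom.id ℚ A) Z) ^ (j : ℕ)) k).det := by
    intro K _ _ a
    rw [AlgHom.map_det]
    congr 1
    ext j k
    simp only [AlgHom.mapMatrix_apply, Matrix.map_apply, Matrix.of_apply, M]
    rw [← key K a (Z ^ (j : ℕ)) k, map_pow]
  refine ⟨M.det, ?_, ?_⟩
  · -- nonvanishing
    intro hc
    obtain ⟨σ, hσ⟩ := aux_exists_injective_algHoms A
    let τ : Fin d → (Kbar ⊗[ℚ] A →ₐ[Kbar] Kbar) := fun i =>
      Algebra.TensorProduct.lift (AlgHom.id Kbar Kbar) (σ i) (fun x y => Commute.all _ _)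
    let fac : Fin d × Fin d → MvPolynomial (Fin n) Kbar := fun p =>
      C (σ p.1 w - σ p.2 w) - ∑ k : Fin n, C (σ p.1 (u k) - σ p.2 (u k)) * X k
    have heval : ∀ (p : Fin d × Fin d) (x : Fin n → Kbar),
        eval x (fac p) = (σ p.1 w - σ p.2 w) - ∑ k : Fin n, (σ p.1 (u k) - σ p.2 (u k)) * x k := by
      intro p x
      simp [fac]
    have hfac : ∀ p ∈ (Finset.univ : Finset (Fin d)).offDiag, fac p ≠ 0 := by
      intro p hp h0
      apply (Finset.mem_offDiag.mp hp).2.2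
      apply hσ
      apply AlgHom.ext_of_adjoin_eq_top hgen
      have hw : σ p.1 w = σ p.2 w := by
        have h2 := congrArg (eval (0 : Fin n → Kbar)) h0
        rw [heval] at h2
        simpa using sub_eq_zero.mp (by simpa using h2)
      rintro x (⟨k, rfl⟩ | hx)
      · have h1 := congrArg (eval (Pi.single k (1 : Kbar))) h0
        rw [heval] at h1
        simp only [map_zero, Pi.single_apply, mul_ite, mul_one, mul_zero,
          Finset.sum_ite_eq', Finset.mem_univ, if_true, hw, sub_self, zero_sub,
          neg_eq_zero] at h1
        exact sub_eq_zero.mp h1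
      · rw [Set.mem_singleton_iff.mp hx]
        exact hw
    have hP : (∏ p ∈ (Finset.univ : Finset (Fin d)).offDiag, fac p) ≠ 0 :=
      Finset.prod_ne_zero_iff.mpr hfac
    obtain ⟨a, ha⟩ : ∃ a : Fin n → Kbar,
        eval a (∏ p ∈ (Finset.univ : Finset (Fin d)).offDiag, fac p) ≠ 0 := by
      by_contra h
      push_neg at h
      exact hP (MvPolynomial.funext fun x => by rw [h x, map_zero])
    set zK : Kbar ⊗[ℚ] A := Algebra.TensorProduct.map (aeval a) (AlgHom.id ℚ A) Z with hzKdef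
    have hzK : zK = (1 : Kbar) ⊗ₜ[ℚ] w - ∑ i : Fin n, (a i) ⊗ₜ[ℚ] (u i) := by
      simp [hzKdef, Z, map_sub, map_sum, Algebra.TensorProduct.map_tmul]
    have hτz : ∀ i, τ i zK = σ i w - ∑ k : Fin n, a k * σ i (u k) := by
      intro i
      rw [hzK]
      simp [τ, Algebra.TensorProduct.lift_tmul]
    have hdist : Function.Injective fun i => τ i zK := by
      intro i j hij
      have hij' : τ i zK = τ j zK := hij
      by_contra hne
      have h1 : eval a (fac (i, j)) = τ i zK - τ j zK := by
        rw [heval, hτz, hτz]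
        rw [show (∑ k : Fin n, ((σ i) (u k) - (σ j) (u k)) * a k)
            = (∑ k : Fin n, a k * (σ i) (u k)) - ∑ k : Fin n, a k * (σ j) (u k) by
          rw [← Finset.sum_sub_distrib]
          exact Finset.sum_congr rfl fun k _ => by ring]
        ring
      have h2 : eval a (fac (i, j)) ≠ 0 := by
        intro h0
        apply ha
        rw [map_prod]
        exact Finset.prod_eq_zero
          (Finset.mem_offDiag.mpr ⟨Finset.mem_univ _, Finset.mem_univ _, hne⟩) h0
      exact h2 (by rw [h1, hij', sub_self])
    have hlin : LinearIndependent Kbar (fun j : Fin d => zK ^ (j : ℕ)) := by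
      rw [Fintype.linearIndependent_iff]
      intro g hg
      have hv : ∀ j : Fin d, (∑ i : Fin d, g i * (τ j zK) ^ (i : ℕ)) = 0 := by
        intro j
        have := congrArg (τ j) hg
        simpa [map_sum, map_pow, smul_eq_mul] using this
      have hzero := Matrix.eq_zero_of_forall_index_sum_mul_pow_eq_zero hdist hv
      exact fun i => congrFun hzero i
    have hrows : LinearIndependent Kbar
        (fun j : Fin d => (b.baseChange Kbar).equivFun (zK ^ (j : ℕ))) :=
      hlin.map' (b.baseChange Kbar).equivFun.toLinearMap (LinearEquiv.ker _)
    have hunit : IsUnit (Matrix.of fun (j k : Fin d) => (b.baseChange Kbar).repr (zK ^ (j : ℕ)) k) := by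
      rw [← Matrix.linearIndependent_rows_iff_isUnit]
      convert hrows using 2
      rfl
    have hdet0 : aeval a M.det = 0 := by rw [hc, map_zero]
    rw [spec Kbar a] at hdet0
    exact (Matrix.isUnit_iff_isUnit_det _).mp hunit |>.ne_zero hdet0
  · -- application
    intro a ha
    have ha' : aeval a M.det ≠ 0 := by
      have : (aeval a) M.det = eval a M.det := RingHom.congr_fun (coe_aeval_eq_eval a) M.det
      rwa [this]
    rw [spec ℚ a] at ha'
    set zQ : ℚ ⊗[ℚ] A := Algebra.TensorProduct.map (aeval a) (AlgHom.id ℚ A) Z with hzQdef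
    have hrows : LinearIndependent ℚ
        (fun j : Fin d => (b.baseChange ℚ).equivFun (zQ ^ (j : ℕ))) := by
      have hu := Matrix.linearIndependent_rows_iff_isUnit.mpr
        ((Matrix.isUnit_iff_isUnit_det _).mpr (isUnit_iff_ne_zero.mpr ha'))
      convert hu using 2
      rfl
      rfl
    have hpow : LinearIndependent ℚ (fun j : Fin d => zQ ^ (j : ℕ)) :=
      LinearIndependent.of_comp (b.baseChange ℚ).equivFun.toLinearMap hrows
    have hz : (Algebra.TensorProduct.lid ℚ A) zQ = w - ∑ i, a i • u i := by
      simp [hzQdef, Z, map_sub, map_sum, Algebra.TensorProduct.map_tmul,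
        Algebra.TensorProduct.lid_tmul]
    have hpowA : LinearIndependent ℚ (fun j : Fin d => (w - ∑ i, a i • u i) ^ (j : ℕ)) := by
      have h2 := hpow.map' (Algebra.TensorProduct.lid ℚ A).toLinearEquiv.toLinearMap
        (LinearEquiv.ker _)
      have h3 : (⇑(Algebra.TensorProduct.lid ℚ A).toLinearEquiv.toLinearMap ∘
            fun j : Fin d => zQ ^ (j : ℕ))
          = fun j : Fin d => (w - ∑ i, a i • u i) ^ (j : ℕ) := by
        funext j
        show (Algebra.TensorProduct.lid ℚ A) (zQ ^ (j : ℕ)) = _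
        rw [map_pow, hz]
      rwa [h3] at h2
    have hspan := hpowA.span_eq_top_of_card_eq_finrank' (by simp [hd])
    have hle : Submodule.span ℚ (Set.range fun j : Fin d => (w - ∑ i, a i • u i) ^ (j : ℕ))
        ≤ Subalgebra.toSubmodule (Algebra.adjoin ℚ {w - ∑ i, a i • u i}) := by
      rw [Submodule.span_le]
      rintro x ⟨j, rfl⟩
      exact Subalgebra.pow_mem _ (Algebra.self_mem_adjoin_singleton ℚ _) _
    exact Algebra.toSubmodule_eq_top.mp (top_unique (hspan ▸ hle))

end

set_option maxHeartbeats 1000000 in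
/-- **Proposition (generic coordinate change).** Let `I ⊆ ℚ[x₁,…,xₙ]` be a zero-dimensional
radical ideal. There is a non-empty Zariski-open subset `U ⊆ ℚ^{n-1}` (complement of the zero
set of a nonzero polynomial `c` in `n-1` variables) such that for all `a ∈ U` the coordinate
change `φ_a` (with `φ_a(xᵢ) = xᵢ` for `i < n` and `φ_a(xₙ) = xₙ + Σ aᵢxᵢ`) satisfies
`dim_ℚ ℚ[X]/φ_a(I) = dim_ℚ ℚ[xₙ]/(φ_a(I) ∩ ℚ[xₙ])`. -/
theorem statement2 (n : ℕ) (I : Ideal (MvPolynomial (Fin (n + 1)) ℚ))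
    (hrad : I.IsRadical)
    (hfin : Module.Finite ℚ (MvPolynomial (Fin (n + 1)) ℚ ⧸ I)) :
    ∃ c : MvPolynomial (Fin n) ℚ, c ≠ 0 ∧
      ∀ a : Fin n → ℚ, eval a c ≠ 0 →
        ∀ φ : MvPolynomial (Fin (n + 1)) ℚ →ₐ[ℚ] MvPolynomial (Fin (n + 1)) ℚ,
          (∀ i : Fin n, φ (X i.castSucc) = X i.castSucc) →
          φ (X (Fin.last n)) = X (Fin.last n) + ∑ i : Fin n, C (a i) * X i.castSucc →
          Module.finrank ℚ (MvPolynomial (Fin (n + 1)) ℚ ⧸ Ideal.map φ I) =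
            Module.finrank ℚ (Polynomial ℚ ⧸ Ideal.comap
              (Polynomial.aeval (X (Fin.last n)) :
                Polynomial ℚ →ₐ[ℚ] MvPolynomial (Fin (n + 1)) ℚ)
              (Ideal.map φ I)) := by
  classical
  haveI := hfin
  haveI : IsReduced (MvPolynomial (Fin (n + 1)) ℚ ⧸ I) :=
    (Ideal.isRadical_iff_quotient_reduced I).mp hrad
  set Mv := MvPolynomial (Fin (n + 1)) ℚ with hMv
  let A := Mv ⧸ I
  let π : Mv →ₐ[ℚ] A := Ideal.Quotient.mkₐ ℚ I
  have hπ : Function.Surjective π := Ideal.Quotient.mkₐ_surjective ℚ I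
  let u : Fin n → A := fun i => π (X i.castSucc)
  let w : A := π (X (Fin.last n))
  have hgen : Algebra.adjoin ℚ (Set.range u ∪ {w}) = ⊤ := by
    rw [← top_le_iff]
    have h1 : (Algebra.adjoin ℚ (Set.range (X : Fin (n+1) → Mv))).map π = ⊤ := by
      rw [MvPolynomial.adjoin_range_X, Algebra.map_top, (AlgHom.range_eq_top π).mpr hπ]
    have h2 : (Algebra.adjoin ℚ (Set.range (X : Fin (n+1) → Mv))).map π
        = Algebra.adjoin ℚ (π '' Set.range (X : Fin (n+1) → Mv)) :=
      AlgHom.map_adjoin π _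
    rw [h2] at h1
    rw [← h1]
    apply Algebra.adjoin_mono
    rintro x ⟨p, ⟨k, rfl⟩, rfl⟩
    induction k using Fin.lastCases with
    | last => exact Or.inr rfl
    | cast i => exact Or.inl ⟨i, rfl⟩
  obtain ⟨c, hc0, hc⟩ := aux_generic_primitive A n u w hgen
  refine ⟨c, hc0, ?_⟩
  intro a ha φ hφ1 hφ2
  -- the inverse coordinate change
  let g : Fin (n + 1) → Mv := fun k =>
    Fin.lastCases (X (Fin.last n) - ∑ i : Fin n, C (a i) * X i.castSucc)
      (fun i => X i.castSucc) k
  let φinv : Mv →ₐ[ℚ] Mv := aeval g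
  have hginv1 : ∀ i : Fin n, φinv (X i.castSucc) = X i.castSucc := by
    intro i
    show (aeval g) (X i.castSucc) = _
    rw [aeval_X]
    exact Fin.lastCases_castSucc ..
  have hginv2 : φinv (X (Fin.last n))
      = X (Fin.last n) - ∑ i : Fin n, C (a i) * X i.castSucc := by
    show (aeval g) (X (Fin.last n)) = _
    rw [aeval_X]
    exact Fin.lastCases_last ..
  have hC : ∀ (q : ℚ) (f : Mv →ₐ[ℚ] Mv), f (C q) = C q := by
    intro q f
    rw [← MvPolynomial.algebraMap_eq]
    exact f.commutes q
  have h1 : φ.comp φinv = AlgHom.id ℚ Mv := by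
    apply MvPolynomial.algHom_ext
    intro k
    induction k using Fin.lastCases with
    | last =>
        rw [AlgHom.id_apply]
        simp only [AlgHom.comp_apply, AlgHom.id_apply, hginv2, map_sub, map_sum, map_mul,
          hφ2, hC _ φ, hφ1]
        ring
    | cast i =>
        rw [AlgHom.id_apply]
        simp only [AlgHom.comp_apply, AlgHom.id_apply, hginv1, hφ1]
  have h2 : φinv.comp φ = AlgHom.id ℚ Mv := by
    apply MvPolynomial.algHom_ext
    intro k
    induction k using Fin.lastCases with
    | last =>
        rw [AlgHom.id_apply]
        simp only [AlgHom.comp_apply, AlgHom.id_apply, hφ2, map_add, map_sum, map_mul,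
          hginv2, hC _ φinv, hginv1]
        ring
    | cast i =>
        rw [AlgHom.id_apply]
        simp only [AlgHom.comp_apply, AlgHom.id_apply, hφ1, hginv1]
  let e : Mv ≃ₐ[ℚ] Mv := AlgEquiv.ofAlgHom φ φinv h1 h2
  have hmap : Ideal.map φ I = Ideal.map (e : Mv →+* Mv) I := rfl
  let ψ : A ≃ₐ[ℚ] (Mv ⧸ Ideal.map φ I) :=
    Ideal.quotientEquivAlg I (Ideal.map φ I) e hmap
  have hψmk : ∀ x : Mv, ψ (Ideal.Quotient.mk I x)
      = Ideal.Quotient.mk (Ideal.map φ I) (φ x) := fun x => rfl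
  -- the element z
  have hφφinv : φ (φinv (X (Fin.last n))) = X (Fin.last n) := by
    have := DFunLike.congr_fun h1 (X (Fin.last n))
    rw [AlgHom.id_apply] at this
    simpa using this
  let z : A := π (φinv (X (Fin.last n)))
  have hsm : ∀ i : Fin n, π (C (a i) * X i.castSucc) = a i • u i := by
    intro i
    rw [← MvPolynomial.smul_eq_C_mul, map_smul]
  have hzeq : z = w - ∑ i, a i • u i := by
    simp only [z, hginv2, map_sub, map_sum, hsm]
    rfl
  have hz : Algebra.adjoin ℚ {z} = ⊤ := by
    rw [hzeq]
    exact hc a ha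
  -- the aeval z map
  let G : Polynomial ℚ →ₐ[ℚ] A := Polynomial.aeval z
  have hGsurj : Function.Surjective G := by
    rw [← AlgHom.range_eq_top]
    rw [← Algebra.adjoin_singleton_eq_range_aeval]
    exact hz
  have hGF : ∀ p : Polynomial ℚ, ψ (G p)
      = Ideal.Quotient.mk (Ideal.map φ I)
        ((Polynomial.aeval (X (Fin.last n)) : Polynomial ℚ →ₐ[ℚ] Mv) p) := by
    have hcomp : (ψ.toAlgHom.comp G)
        = (Ideal.Quotient.mkₐ ℚ (Ideal.map φ I)).comp
            (Polynomial.aeval (X (Fin.last n)) : Polynomial ℚ →ₐ[ℚ] Mv) := by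
      apply Polynomial.algHom_ext
      simp only [G, AlgHom.comp_apply, Polynomial.aeval_X, Ideal.Quotient.mkₐ_eq_mk]
      show ψ (π (φinv (X (Fin.last n)))) = _
      rw [show π (φinv (X (Fin.last n))) = Ideal.Quotient.mk I (φinv (X (Fin.last n))) from rfl,
        hψmk, hφφinv]
    intro p
    have := DFunLike.congr_fun hcomp p
    simpa using this
  have hker : Ideal.comap
      (Polynomial.aeval (X (Fin.last n)) : Polynomial ℚ →ₐ[ℚ] Mv)
      (Ideal.map φ I) = RingHom.ker G := by
    ext p
    rw [Ideal.mem_comap, RingHom.mem_ker]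
    constructor
    · intro hp
      have h0 : Ideal.Quotient.mk (Ideal.map φ I)
          ((Polynomial.aeval (X (Fin.last n)) : Polynomial ℚ →ₐ[ℚ] Mv) p) = 0 :=
        Ideal.Quotient.eq_zero_iff_mem.mpr hp
      rw [← hGF] at h0
      have := ψ.injective (by rw [h0, map_zero] : ψ (G p) = ψ 0)
      exact this
    · intro hp
      have h0 : ψ (G p) = 0 := by rw [hp, map_zero]
      rw [hGF] at h0
      exact Ideal.Quotient.eq_zero_iff_mem.mp h0
  have e1 : Module.finrank ℚ (Mv ⧸ Ideal.map φ I) = Module.finrank ℚ A :=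
    ψ.symm.toLinearEquiv.finrank_eq
  have e2 : Module.finrank ℚ (Polynomial ℚ ⧸ RingHom.ker G) = Module.finrank ℚ A :=
    (Ideal.quotientKerAlgEquivOfSurjective hGsurj).toLinearEquiv.finrank_eq
  rw [hker, e1, e2]
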